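/- Let ρ : ℝ^d → [0,∞) be an L² probability density. Then there exists K > 0 such that for all x and all r > 0, ∫ μ(B(y,r)) dμ(y) ≤ K · r^d, where dμ = ρ dLeb. In particular the lower correlation dimension of μ is at least d. -/

import Mathlib

open MeasureTheory Filter Metric Topology
open scoped ENNReal NNReal

/-- Correlation integral: `∫ μ(B(x,r)) dμ(x)`. -/
noncomputable def corrIntegral {X : Type*} [PseudoMetricSpace X] [MeasurableSpace X]
    (μ : Measure X) (r : ℝ) : ℝ :=
  ∫ x, (μ (ball x r)).toReal ∂μ

private lemma two_mul_ofReal_le (a b : ℝ) :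
    2 * (ENNReal.ofReal a * ENNReal.ofReal b) ≤ ENNReal.ofReal a ^ 2 + ENNReal.ofReal b ^ 2 := by
  rcases le_or_gt a 0 with ha | ha
  · simp [ENNReal.ofReal_eq_zero.2 ha]
  rcases le_or_gt b 0 with hb | hb
  · simp [ENNReal.ofReal_eq_zero.2 hb]
  have key : 2 * (a * b) ≤ a ^ 2 + b ^ 2 := by nlinarith [sq_nonneg (a - b)]
  calc 2 * (ENNReal.ofReal a * ENNReal.ofReal b) = ENNReal.ofReal (2 * (a * b)) := by
        rw [ENNReal.ofReal_mul (by norm_num : (0:ℝ) ≤ 2), ENNReal.ofReal_mul ha.le,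
          ENNReal.ofReal_ofNat]
    _ ≤ ENNReal.ofReal (a ^ 2 + b ^ 2) := ENNReal.ofReal_le_ofReal key
    _ = ENNReal.ofReal a ^ 2 + ENNReal.ofReal b ^ 2 := by
        rw [ENNReal.ofReal_add (by positivity) (by positivity), ENNReal.ofReal_pow ha.le,
          ENNReal.ofReal_pow hb.le]

private lemma ite_ball_eq_indicator {E : Type*} [PseudoMetricSpace E] (g : E → ℝ≥0∞) (x : E)
    (r : ℝ) : (fun y => if dist y x < r then g y else 0) = (ball x r).indicator g := by
  classical
  funext y
  by_cases h : dist y x < r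
  · rw [if_pos h, Set.indicator_of_mem (mem_ball.mpr h)]
  · rw [if_neg h, Set.indicator_of_notMem (fun hc => h (mem_ball.mp hc))]

private lemma ite_ball_eq_indicator' {E : Type*} [PseudoMetricSpace E] (g : E → ℝ≥0∞) (y : E)
    (r : ℝ) : (fun z => if dist y z < r then g z else 0) = (ball y r).indicator g := by
  classical
  funext z
  by_cases h : dist y z < r
  · rw [if_pos h, Set.indicator_of_mem (mem_ball'.mpr h)]
  · rw [if_neg h, Set.indicator_of_notMem (fun hc => h (mem_ball'.mp hc))]

/-- If `ρ : ℝ^d → [0,∞)` is an `L²` probability density and `dμ = ρ dLeb`, then there is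
`K > 0` with `∫ μ(B(y,r)) dμ(y) ≤ K·r^d` for all `r > 0`; in particular the lower
correlation dimension of `μ` is at least `d`. -/
theorem correlation_integral_L2_density_bound (d : ℕ)
    (ρ : EuclideanSpace ℝ (Fin d) → ℝ) (hρ0 : ∀ x, 0 ≤ ρ x)
    (hρ2 : MemLp ρ 2 volume)
    (μ : Measure (EuclideanSpace ℝ (Fin d)))
    (hμ : μ = volume.withDensity (fun x => ENNReal.ofReal (ρ x)))
    (hprob : IsProbabilityMeasure μ) :
    (∃ K > (0:ℝ), ∀ r : ℝ, 0 < r → corrIntegral μ r ≤ K * r ^ (d : ℝ)) ∧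
      (d : ℝ) ≤ liminf (fun r : ℝ => Real.log (corrIntegral μ r) / Real.log r) (𝓝[>] 0) := by
  -- measurable version of the density
  obtain ⟨ρ', hρ'meas, hρ'ae⟩ := hρ2.aestronglyMeasurable.aemeasurable
  set g : (EuclideanSpace ℝ (Fin d)) → ℝ≥0∞ := fun x => ENNReal.ofReal (ρ' x) with hg_def
  have hgmeas : Measurable g := ENNReal.measurable_ofReal.comp hρ'meas
  have hgae : (fun x => ENNReal.ofReal (ρ x)) =ᵐ[volume] g :=
    hρ'ae.mono fun x hx => by simp [hg_def, hx]
  have hμg : μ = volume.withDensity g := by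
    rw [hμ, withDensity_congr_ae hgae]
  -- volume of balls
  have v_def : True := trivial
  set v : ℝ≥0∞ := volume (ball (0:(EuclideanSpace ℝ (Fin d))) 1) with hv_def
  have hvol : ∀ (x : (EuclideanSpace ℝ (Fin d))) (r : ℝ), 0 < r →
      volume (ball x r) = ENNReal.ofReal (r ^ d) * v := by
    intro x r hr
    rcases Nat.eq_zero_or_pos d with hd | hd
    · subst hd
      have h1 : ball x r = (Set.univ : Set (EuclideanSpace ℝ (Fin 0))) :=
        Set.eq_univ_of_forall fun y => by
          have hyx : y = x := Subsingleton.elim _ _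
          simp [mem_ball, hyx, hr]
      have h2 : ball (0 : EuclideanSpace ℝ (Fin 0)) 1 = (Set.univ : Set (EuclideanSpace ℝ (Fin 0))) :=
        Set.eq_univ_of_forall fun y => by
          have hy0 : y = (0 : EuclideanSpace ℝ (Fin 0)) := Subsingleton.elim _ _
          simp [mem_ball, hy0]
      simp [h1, h2, hv_def]
    · haveI : Nonempty (Fin d) := Fin.pos_iff_nonempty.mp hd
      haveI : Nontrivial (EuclideanSpace ℝ (Fin d)) := inferInstanceAs (Nontrivial (PiLp 2 fun _ : Fin d => ℝ))
      rw [Measure.addHaar_ball _ x hr.le, hv_def]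
      congr 2
      simp [finrank_euclideanSpace_fin]
  have hv0 : v ≠ 0 := (measure_ball_pos volume (0:(EuclideanSpace ℝ (Fin d))) one_pos).ne'
  have hvt : v ≠ ∞ := measure_ball_lt_top.ne
  -- basic formulas
  have hball : ∀ (r : ℝ) (x : (EuclideanSpace ℝ (Fin d))),
      μ (ball x r) = ∫⁻ y, (if dist y x < r then g y else 0) ∂volume := by
    intro r x
    rw [hμg, withDensity_apply _ measurableSet_ball, ← lintegral_indicator measurableSet_ball,
      ← ite_ball_eq_indicator g x r]
  have hdistmeas : ∀ r : ℝ, MeasurableSet {p : (EuclideanSpace ℝ (Fin d)) × (EuclideanSpace ℝ (Fin d)) | dist p.2 p.1 < r} := by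
    intro r
    exact measurableSet_lt (by fun_prop) measurable_const
  have hFmeas : ∀ r : ℝ, Measurable fun x => μ (ball x r) := by
    intro r
    simp_rw [hball r]
    apply Measurable.lintegral_prod_right' (f := fun p : (EuclideanSpace ℝ (Fin d)) × (EuclideanSpace ℝ (Fin d)) => if dist p.2 p.1 < r then g p.2 else 0)
    exact Measurable.ite (hdistmeas r) (hgmeas.comp measurable_snd) measurable_const
  have hcorr_eq : ∀ r : ℝ, corrIntegral μ r = (∫⁻ x, μ (ball x r) ∂μ).toReal := by
    intro r
    exact integral_toReal ((hFmeas r).aemeasurable) (ae_of_all _ fun x => measure_lt_top μ _)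
  -- square integral of the density
  set S : ℝ≥0∞ := ∫⁻ x, g x ^ 2 ∂volume with hS_def
  have hSt : S ≠ ∞ := by
    have hint : Integrable (fun x => ρ x ^ 2) volume := hρ2.integrable_sq
    have h1 : S ≤ ∫⁻ x, ENNReal.ofReal (ρ' x ^ 2) ∂volume := by
      apply lintegral_mono
      intro x
      calc g x ^ 2 ≤ ENNReal.ofReal |ρ' x| ^ 2 := by
            gcongr
            exact ENNReal.ofReal_le_ofReal (Real.le_norm_self _)
        _ = ENNReal.ofReal (ρ' x ^ 2) := by
            rw [← ENNReal.ofReal_pow (abs_nonneg _), sq_abs]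
    have h2 : ∫⁻ x, ENNReal.ofReal (ρ' x ^ 2) ∂volume = ∫⁻ x, ENNReal.ofReal (ρ x ^ 2) ∂volume :=
      lintegral_congr_ae (hρ'ae.mono fun x hx => by simp [hx])
    have h3 : ∫⁻ x, ENNReal.ofReal (ρ x ^ 2) ∂volume < ∞ := by
      have := hint.hasFiniteIntegral
      rw [hasFiniteIntegral_iff_norm] at this
      refine lt_of_le_of_lt (lintegral_mono fun x => ?_) this
      exact ENNReal.ofReal_le_ofReal (Real.le_norm_self _)
    exact ((h1.trans_eq h2).trans_lt h3).ne
  -- the main upper bound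
  have key : ∀ r : ℝ, 0 < r →
      (∫⁻ x, μ (ball x r) ∂μ) ≤ S * (ENNReal.ofReal (r ^ d) * v) := by
    intro r hr
    set C : ℝ≥0∞ := ENNReal.ofReal (r ^ d) * v with hC_def
    have hite_meas : ∀ x : (EuclideanSpace ℝ (Fin d)), Measurable fun y => if dist y x < r then g y else 0 := by
      intro x
      exact Measurable.ite (measurableSet_lt (by fun_prop) measurable_const) hgmeas measurable_const
    have step1 : ∫⁻ x, μ (ball x r) ∂μ = ∫⁻ x, g x * μ (ball x r) ∂volume := by
      have h := lintegral_withDensity_eq_lintegral_mul volume hgmeas (hFmeas r)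
      rw [← hμg] at h
      simpa [Pi.mul_apply] using h
    have houter_meas : Measurable fun x => g x * μ (ball x r) := hgmeas.mul (hFmeas r)
    have step2 : (2 : ℝ≥0∞) * ∫⁻ x, g x * μ (ball x r) ∂volume
        ≤ ∫⁻ x, (g x ^ 2 * C + ∫⁻ y, (if dist y x < r then g y ^ 2 else 0) ∂volume) ∂volume := by
      rw [← lintegral_const_mul _ houter_meas]
      apply lintegral_mono
      intro x
      have e1 : (2:ℝ≥0∞) * (g x * μ (ball x r))
          = ∫⁻ y, (if dist y x < r then 2 * (g x * g y) else 0) ∂volume := by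
        rw [hball r x, ← lintegral_const_mul _ (hite_meas x), ← lintegral_const_mul _ ((hite_meas x).const_mul _)]
        · congr 1; funext y; split_ifs <;> simp [mul_assoc]
      show (2:ℝ≥0∞) * (g x * μ (ball x r))
          ≤ g x ^ 2 * C + ∫⁻ y, (if dist y x < r then g y ^ 2 else 0) ∂volume
      rw [e1]
      have e2 : (∫⁻ y, (if dist y x < r then 2 * (g x * g y) else 0) ∂volume)
          ≤ ∫⁻ y, ((if dist y x < r then g x ^ 2 else 0) + (if dist y x < r then g y ^ 2 else 0)) ∂volume := by
        apply lintegral_mono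
        intro y
        by_cases h : dist y x < r
        · simpa [h, hg_def] using two_mul_ofReal_le (ρ' x) (ρ' y)
        · simp [h]
      refine e2.trans (le_of_eq ?_)
      rw [lintegral_add_right _ (Measurable.ite (measurableSet_lt (by fun_prop) measurable_const) (hgmeas.pow_const 2) measurable_const)]
      congr 1
      rw [ite_ball_eq_indicator (fun _ => g x ^ 2) x r,
        lintegral_indicator_const measurableSet_ball, hvol x r hr]
    have step3 : ∫⁻ x, (∫⁻ y, (if dist y x < r then g y ^ 2 else 0) ∂volume) ∂volume = S * C := by
      have hmeas2 : Measurable fun p : (EuclideanSpace ℝ (Fin d)) × (EuclideanSpace ℝ (Fin d)) => if dist p.2 p.1 < r then g p.2 ^ 2 else 0 :=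
        Measurable.ite (hdistmeas r) ((hgmeas.comp measurable_snd).pow_const 2) measurable_const
      rw [lintegral_lintegral_swap (f := fun x y => if dist y x < r then g y ^ 2 else 0) hmeas2.aemeasurable]
      have : ∀ y : (EuclideanSpace ℝ (Fin d)), ∫⁻ x, (if dist y x < r then g y ^ 2 else 0) ∂volume = g y ^ 2 * C := by
        intro y
        rw [ite_ball_eq_indicator' (fun _ => g y ^ 2) y r,
          lintegral_indicator_const measurableSet_ball, hvol y r hr]
      simp_rw [this]
      rw [lintegral_mul_const _ (hgmeas.pow_const 2)]
    have step4 : ∫⁻ x, g x ^ 2 * C ∂volume = S * C :=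
      lintegral_mul_const _ (hgmeas.pow_const 2)
    have : (2:ℝ≥0∞) * ∫⁻ x, g x * μ (ball x r) ∂volume ≤ 2 * (S * C) := by
      refine step2.trans (le_of_eq ?_)
      rw [lintegral_add_right _ (Measurable.lintegral_prod_right'
        (f := fun p : (EuclideanSpace ℝ (Fin d)) × (EuclideanSpace ℝ (Fin d)) => if dist p.2 p.1 < r then g p.2 ^ 2 else 0)
        (Measurable.ite (hdistmeas r) ((hgmeas.comp measurable_snd).pow_const 2) measurable_const)),
        step3, step4, two_mul]
    rw [step1]
    exact (ENNReal.mul_le_mul_iff_right (by norm_num) (by norm_num)).mp this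
  -- upper bound, real version
  set K : ℝ := max (S.toReal * v.toReal) 1 with hK_def
  have hK1 : (1:ℝ) ≤ K := le_max_right _ _
  have hK0 : (0:ℝ) < K := lt_of_lt_of_le one_pos hK1
  have main : ∀ r : ℝ, 0 < r → corrIntegral μ r ≤ K * r ^ d := by
    intro r hr
    rw [hcorr_eq r]
    have hne : S * (ENNReal.ofReal (r ^ d) * v) ≠ ∞ :=
      ENNReal.mul_ne_top hSt (ENNReal.mul_ne_top ENNReal.ofReal_ne_top hvt)
    have h1 : (∫⁻ x, μ (ball x r) ∂μ).toReal ≤ (S * (ENNReal.ofReal (r ^ d) * v)).toReal :=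
      ENNReal.toReal_mono hne (key r hr)
    refine h1.trans ?_
    rw [ENNReal.toReal_mul, ENNReal.toReal_mul, ENNReal.toReal_ofReal (by positivity)]
    calc S.toReal * (r ^ d * v.toReal) = (S.toReal * v.toReal) * r ^ d := by ring
      _ ≤ K * r ^ d := by
          apply mul_le_mul_of_nonneg_right (le_max_left _ _) (by positivity)
  -- choose R with μ (ball 0 R) ≥ 1/2
  obtain ⟨n, hn⟩ : ∃ n : ℕ, (2⁻¹ : ℝ≥0∞) ≤ μ (ball (0:(EuclideanSpace ℝ (Fin d))) n) := by
    have hmono : Monotone fun n : ℕ => (ball (0:(EuclideanSpace ℝ (Fin d))) n : Set (EuclideanSpace ℝ (Fin d))) := fun a b hab =>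
      ball_subset_ball (by exact_mod_cast hab)
    have ht : Tendsto (fun n : ℕ => μ (ball (0:(EuclideanSpace ℝ (Fin d))) n)) atTop (𝓝 (μ (⋃ n : ℕ, ball (0:(EuclideanSpace ℝ (Fin d))) n))) :=
      tendsto_measure_iUnion_atTop hmono
    rw [iUnion_ball_nat, measure_univ] at ht
    have : ∀ᶠ n : ℕ in atTop, (2⁻¹ : ℝ≥0∞) < μ (ball (0:(EuclideanSpace ℝ (Fin d))) n) :=
      ht.eventually (eventually_gt_nhds (by norm_num))
    exact this.exists.imp fun n hn => hn.le
  set R : ℝ := (n : ℝ) with hR_def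
  have hR0 : 0 ≤ R := Nat.cast_nonneg n
  set c₂ : ℝ := (2 ^ d * 4 * (R + 1) ^ d)⁻¹ with hc₂_def
  have hc₂0 : 0 < c₂ := by positivity
  -- lower bound for the correlation integral
  have low : ∀ r : ℝ, 0 < r → r ≤ 1 → (c₂ * r ^ d) * (c₂ * r ^ d) ≤ corrIntegral μ r := by
    intro r hr hr1
    set s : ℝ := r / 2 with hs_def
    have hs : 0 < s := by positivity
    set D : Set (EuclideanSpace ℝ (Fin d)) := ball (0:(EuclideanSpace ℝ (Fin d))) (R + 1) with hD_def
    have hDmeas : MeasurableSet D := measurableSet_ball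
    have hDvol : volume D = ENNReal.ofReal ((R + 1) ^ d) * v := hvol _ _ (by positivity)
    have hD0 : volume D ≠ 0 := (measure_ball_pos volume _ (by positivity)).ne'
    have hDt : volume D ≠ ∞ := measure_ball_lt_top.ne
    set W : ℝ≥0∞ := ENNReal.ofReal (s ^ d) * v with hW_def
    have hW0 : W ≠ 0 := by
      simp only [hW_def, ne_eq, mul_eq_zero, ENNReal.ofReal_eq_zero, not_or]
      exact ⟨not_le.mpr (by positivity), hv0⟩
    have hWt : W ≠ ∞ := ENNReal.mul_ne_top ENNReal.ofReal_ne_top hvt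
    -- Fubini lower bound for the averaged ball measure
    have claimA : W * 2⁻¹ ≤ ∫⁻ z in D, μ (ball z s) ∂volume := by
      have hform : ∀ z : (EuclideanSpace ℝ (Fin d)), μ (ball z s) = ∫⁻ y, (if dist y z < s then (1:ℝ≥0∞) else 0) ∂μ := by
        intro z
        rw [ite_ball_eq_indicator (fun _ => (1:ℝ≥0∞)) z s,
          lintegral_indicator_const measurableSet_ball, one_mul]
      simp_rw [hform]
      have hswap : ∫⁻ z in D, ∫⁻ y, (if dist y z < s then (1:ℝ≥0∞) else 0) ∂μ ∂volume
          = ∫⁻ y, ∫⁻ z in D, (if dist y z < s then (1:ℝ≥0∞) else 0) ∂volume ∂μ := by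
        apply lintegral_lintegral_swap (f := fun z y => if dist y z < s then (1:ℝ≥0∞) else 0)
        exact (Measurable.ite (hdistmeas s) measurable_const measurable_const).aemeasurable
      rw [hswap]
      have hinner : ∀ y ∈ ball (0:(EuclideanSpace ℝ (Fin d))) R, W ≤ ∫⁻ z in D, (if dist y z < s then (1:ℝ≥0∞) else 0) ∂volume := by
        intro y hy
        have hsub : ball y s ⊆ D := by
          intro z hz
          rw [hD_def, mem_ball]
          calc dist z 0 ≤ dist z y + dist y 0 := dist_triangle _ _ _
            _ < s + R := add_lt_add (mem_ball.mp hz) (mem_ball.mp hy)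
            _ ≤ R + 1 := by rw [hs_def] at *; linarith
        calc W = volume (ball y s) := (hvol y s hs).symm
          _ = ∫⁻ z in ball y s, (1:ℝ≥0∞) ∂volume := (setLIntegral_one _).symm
          _ = ∫⁻ z in ball y s, (if dist y z < s then (1:ℝ≥0∞) else 0) ∂volume := by
              apply setLIntegral_congr_fun measurableSet_ball
              exact fun z hz => (if_pos (mem_ball'.mp hz)).symm
          _ ≤ ∫⁻ z in D, (if dist y z < s then (1:ℝ≥0∞) else 0) ∂volume :=
              lintegral_mono_set hsub
      calc W * 2⁻¹ ≤ W * μ (ball (0:(EuclideanSpace ℝ (Fin d))) R) := by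
            exact mul_le_mul_right hn _
        _ = ∫⁻ y, (ball (0:(EuclideanSpace ℝ (Fin d))) R).indicator (fun _ => W) y ∂μ := by
            rw [lintegral_indicator_const measurableSet_ball]
        _ ≤ ∫⁻ y, ∫⁻ z in D, (if dist y z < s then (1:ℝ≥0∞) else 0) ∂volume ∂μ := by
            apply lintegral_mono
            intro y
            by_cases hy : y ∈ ball (0:(EuclideanSpace ℝ (Fin d))) R
            · simpa [Set.indicator_of_mem hy] using hinner y hy
            · simp [Set.indicator_of_notMem hy]
    -- existence of a point with large ball measure
    set c₀ : ℝ≥0∞ := W * 4⁻¹ / volume D with hc₀_def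
    obtain ⟨z₀, hz₀⟩ : ∃ z : (EuclideanSpace ℝ (Fin d)), c₀ ≤ μ (ball z s) := by
      by_contra h
      push_neg at h
      have hub : ∫⁻ z in D, μ (ball z s) ∂volume ≤ c₀ * volume D := by
        calc ∫⁻ z in D, μ (ball z s) ∂volume ≤ ∫⁻ _ in D, c₀ ∂volume :=
              lintegral_mono fun z => (h z).le
          _ = c₀ * volume D := setLIntegral_const _ _
      rw [hc₀_def, ENNReal.div_mul_cancel hD0 hDt] at hub
      have : W * 2⁻¹ ≤ W * 4⁻¹ := claimA.trans hub
      have h24 : (2⁻¹ : ℝ≥0∞) ≤ 4⁻¹ := by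
        exact (ENNReal.mul_le_mul_iff_right hW0 hWt).mp this
      norm_num at h24
    -- convert to a real bound
    have hc₀_real : c₂ * r ^ d ≤ c₀.toReal := by
      have hvtr : 0 < v.toReal := ENNReal.toReal_pos hv0 hvt
      have : c₀.toReal = (s ^ d * v.toReal * 4⁻¹) / ((R + 1) ^ d * v.toReal) := by
        rw [hc₀_def, ENNReal.toReal_div, hDvol, ENNReal.toReal_mul, ENNReal.toReal_mul,
          ENNReal.toReal_mul, ENNReal.toReal_ofReal (by positivity),
          ENNReal.toReal_ofReal (by positivity)]
        norm_num
      have hv1 : v.toReal ≠ 0 := hvtr.ne'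
      have hR1 : ((R:ℝ) + 1) ^ d ≠ 0 := by positivity
      have heq : c₀.toReal = c₂ * r ^ d := by
        rw [this, hc₂_def, hs_def, div_pow]
        field_simp
      rw [heq]
    have hm_t : μ (ball z₀ s) ≠ ∞ := measure_ne_top μ _
    have hm_real : c₂ * r ^ d ≤ (μ (ball z₀ s)).toReal :=
      hc₀_real.trans (ENNReal.toReal_mono hm_t hz₀)
    -- from the ball at z₀ to the correlation integral
    have hsub2 : ∀ x ∈ ball z₀ s, ball z₀ s ⊆ ball x r := by
      intro x hx w hw
      rw [mem_ball]
      calc dist w x ≤ dist w z₀ + dist z₀ x := dist_triangle _ _ _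
        _ < s + s := add_lt_add (mem_ball.mp hw) (by rw [dist_comm]; exact mem_ball.mp hx)
        _ = r := by rw [hs_def]; ring
    have hint1 : Integrable (fun x => (μ (ball x r)).toReal) μ := by
      refine ⟨((hFmeas r).ennreal_toReal).aestronglyMeasurable, ?_⟩
      apply HasFiniteIntegral.of_bounded (C := 1)
      apply ae_of_all
      intro x
      rw [Real.norm_eq_abs, abs_of_nonneg ENNReal.toReal_nonneg]
      have : μ (ball x r) ≤ 1 := by
        rw [← measure_univ (μ := μ)]
        exact measure_mono (Set.subset_univ _)
      calc (μ (ball x r)).toReal ≤ (1:ℝ≥0∞).toReal := ENNReal.toReal_mono (by norm_num) this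
        _ = 1 := by norm_num
    have hint2 : Integrable ((ball z₀ s).indicator fun _ => (μ (ball z₀ s)).toReal) μ :=
      (integrable_const _).indicator measurableSet_ball
    have hptwise : ∀ x, (ball z₀ s).indicator (fun _ => (μ (ball z₀ s)).toReal) x
        ≤ (μ (ball x r)).toReal := by
      intro x
      by_cases hx : x ∈ ball z₀ s
      · rw [Set.indicator_of_mem hx]
        exact ENNReal.toReal_mono (measure_ne_top μ _) (measure_mono (hsub2 x hx))
      · rw [Set.indicator_of_notMem hx]
        exact ENNReal.toReal_nonneg
    have hbig : (μ (ball z₀ s)).toReal * (μ (ball z₀ s)).toReal ≤ corrIntegral μ r := by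
      have := integral_mono hint2 hint1 hptwise
      rwa [integral_indicator_const _ measurableSet_ball, smul_eq_mul] at this
    calc (c₂ * r ^ d) * (c₂ * r ^ d)
        ≤ (μ (ball z₀ s)).toReal * (μ (ball z₀ s)).toReal := by
          apply mul_le_mul hm_real hm_real (by positivity) ENNReal.toReal_nonneg
      _ ≤ corrIntegral μ r := hbig
  -- assemble part 1
  refine ⟨⟨K, hK0, fun r hr => ?_⟩, ?_⟩
  · rw [Real.rpow_natCast]
    exact main r hr
  -- part 2 : liminf bound
  · set P : ℝ → ℝ := fun r => Real.log (corrIntegral μ r) / Real.log r with hP_def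
    have hIoo : ∀ᶠ r in 𝓝[>] (0:ℝ), r ∈ Set.Ioo (0:ℝ) 1 :=
      Ioo_mem_nhdsGT_of_mem ⟨le_refl 0, one_pos⟩
    have hloginv : Tendsto (fun r : ℝ => (Real.log r)⁻¹) (𝓝[>] (0:ℝ)) (𝓝 0) := by
      have h1 : Tendsto (fun r : ℝ => -Real.log r) (𝓝[>] (0:ℝ)) atTop :=
        tendsto_neg_atBot_atTop.comp Real.tendsto_log_nhdsGT_zero
      have h2 : Tendsto (fun r : ℝ => (-Real.log r)⁻¹) (𝓝[>] (0:ℝ)) (𝓝 0) :=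
        h1.inv_tendsto_atTop
      have h3 : Tendsto (fun r : ℝ => -(-Real.log r)⁻¹) (𝓝[>] (0:ℝ)) (𝓝 (-0)) := h2.neg
      simpa [inv_neg] using h3
    set u : ℝ → ℝ := fun r => Real.log K * (Real.log r)⁻¹ + d with hu_def
    set w : ℝ → ℝ := fun r => (2 * Real.log c₂) * (Real.log r)⁻¹ + 2 * d with hw_def
    have hu_tendsto : Tendsto u (𝓝[>] (0:ℝ)) (𝓝 (d:ℝ)) := by
      have := (hloginv.const_mul (Real.log K)).add_const (d:ℝ)
      simpa using this
    have hw_tendsto : Tendsto w (𝓝[>] (0:ℝ)) (𝓝 (2 * d:ℝ)) := by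
      have := (hloginv.const_mul (2 * Real.log c₂)).add_const (2 * d:ℝ)
      simpa using this
    have hbounds : ∀ᶠ r in 𝓝[>] (0:ℝ), u r ≤ P r ∧ P r ≤ w r := by
      filter_upwards [hIoo] with r hr
      obtain ⟨hr0, hr1⟩ := hr
      have hlogr_neg : Real.log r < 0 := Real.log_neg hr0 hr1
      have hlogr_ne : Real.log r ≠ 0 := hlogr_neg.ne
      have hclow : 0 < (c₂ * r ^ d) * (c₂ * r ^ d) := by positivity
      have hcorr_pos : 0 < corrIntegral μ r := lt_of_lt_of_le hclow (low r hr0 hr1.le)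
      constructor
      · -- lower bound on P from the upper bound on corr
        have hlog_up : Real.log (corrIntegral μ r) ≤ Real.log K + d * Real.log r := by
          calc Real.log (corrIntegral μ r) ≤ Real.log (K * r ^ d) :=
                Real.log_le_log hcorr_pos (main r hr0)
            _ = Real.log K + d * Real.log r := by
                rw [Real.log_mul hK0.ne' (by positivity), Real.log_pow]
        have hdiv : (Real.log K + d * Real.log r) / Real.log r
            ≤ Real.log (corrIntegral μ r) / Real.log r :=
          div_le_div_of_nonpos_of_le hlogr_neg.le hlog_up
        calc u r = (Real.log K + d * Real.log r) / Real.log r := by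
              rw [hu_def]
              field_simp
          _ ≤ P r := hdiv
      · -- upper bound on P from the lower bound on corr
        have hlog_low : 2 * Real.log c₂ + (2*(d:ℝ)) * Real.log r ≤ Real.log (corrIntegral μ r) := by
          have hsplit : Real.log ((c₂ * r ^ d) * (c₂ * r ^ d))
              = 2 * Real.log c₂ + (2*(d:ℝ)) * Real.log r := by
            rw [Real.log_mul (by positivity) (by positivity),
              Real.log_mul hc₂0.ne' (by positivity), Real.log_pow]
            ring
          calc 2 * Real.log c₂ + (2*(d:ℝ)) * Real.log r
              = Real.log ((c₂ * r ^ d) * (c₂ * r ^ d)) := hsplit.symm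
            _ ≤ Real.log (corrIntegral μ r) := Real.log_le_log hclow (low r hr0 hr1.le)
        have hdiv : Real.log (corrIntegral μ r) / Real.log r
            ≤ (2 * Real.log c₂ + (2*(d:ℝ)) * Real.log r) / Real.log r :=
          div_le_div_of_nonpos_of_le hlogr_neg.le hlog_low
        calc P r ≤ (2 * Real.log c₂ + (2*(d:ℝ)) * Real.log r) / Real.log r := hdiv
          _ = w r := by
              rw [hw_def]
              field_simp
    have hPw : ∀ᶠ r in 𝓝[>] (0:ℝ), P r ≤ 2 * d + 1 := by
      have hev : ∀ᶠ r in 𝓝[>] (0:ℝ), w r ≤ 2 * d + 1 :=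
        hw_tendsto.eventually (eventually_le_nhds (by linarith))
      filter_upwards [hbounds, hev] with r h1 h2
      exact h1.2.trans h2
    have hcobdd : IsCoboundedUnder (· ≥ ·) (𝓝[>] (0:ℝ)) P :=
      isCoboundedUnder_ge_of_eventually_le _ hPw
    have hliminf_u : liminf u (𝓝[>] (0:ℝ)) = (d:ℝ) := hu_tendsto.liminf_eq
    calc (d:ℝ) = liminf u (𝓝[>] (0:ℝ)) := hliminf_u.symm
      _ ≤ liminf P (𝓝[>] (0:ℝ)) :=
          liminf_le_liminf (hbounds.mono fun r h => h.1) hu_tendsto.isBoundedUnder_ge hcobdd
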